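/- A simple game G = (N, W) with |N| = n players is weighted if and only if G is α_{n+1}-trade robust, where α_{n+1} is the maximum absolute value of determinants of (n+1)×(n+1) 0–1 matrices. -/

import Mathlib

open Finset

/-- A square real matrix has all entries in {0,1}. -/
def IsZeroOne {k : ℕ} (M : Matrix (Fin k) (Fin k) ℝ) : Prop :=
  ∀ i j, M i j = 0 ∨ M i j = 1

/-- `alpha k` is the maximum of `|det M|` over k×k 0–1 matrices. -/
noncomputable def alpha (k : ℕ) : ℝ :=
  sSup {x : ℝ | ∃ M : Matrix (Fin k) (Fin k) ℝ, IsZeroOne M ∧ x = |M.det|}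

/-- A simple game with player set `Fin n`, given by its set `W` of winning
coalitions, is weighted. -/
def IsWeighted {n : ℕ} (W : Set (Finset (Fin n))) : Prop :=
  ∃ (w : Fin n → ℝ) (q : ℝ), ∀ S : Finset (Fin n), S ∈ W ↔ q ≤ ∑ i ∈ S, w i

/-- `(X; Y)` is a trading transform: every player occurs equally often
among the `X`'s and among the `Y`'s. -/
def IsTradingTransform {n j : ℕ} (X Y : Fin j → Finset (Fin n)) : Prop :=
  ∀ p : Fin n,
    (Finset.univ.filter fun i => p ∈ X i).card =
    (Finset.univ.filter fun i => p ∈ Y i).card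

/-- The game `W` is `k`-trade robust (for a real bound `k`): there is no trading
transform of size `j` with `1 ≤ j ≤ k` turning winning coalitions into losing ones. -/
def TradeRobustUpTo {n : ℕ} (W : Set (Finset (Fin n))) (k : ℝ) : Prop :=
  ¬ ∃ (j : ℕ) (X Y : Fin j → Finset (Fin n)),
      1 ≤ j ∧ (j : ℝ) ≤ k ∧ IsTradingTransform X Y ∧
      (∀ i, X i ∈ W) ∧ (∀ i, Y i ∉ W)

set_option maxHeartbeats 1000000
lemma alphaSet_nonempty (k : ℕ) :
    {x : ℝ | ∃ M : Matrix (Fin k) (Fin k) ℝ, IsZeroOne M ∧ x = |M.det|}.Nonempty :=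
  ⟨|(0 : Matrix (Fin k) (Fin k) ℝ).det|, 0, fun _ _ => Or.inl rfl, rfl⟩

lemma alphaSet_bddAbove (k : ℕ) :
    BddAbove {x : ℝ | ∃ M : Matrix (Fin k) (Fin k) ℝ, IsZeroOne M ∧ x = |M.det|} := by
  refine ⟨(k.factorial : ℝ), ?_⟩
  rintro x ⟨M, hM, rfl⟩
  have h1 : ∀ i j, |M i j| ≤ 1 := by
    intro i j; rcases hM i j with h | h <;> rw [h] <;> norm_num
  calc |M.det| = |∑ σ : Equiv.Perm (Fin k), (Equiv.Perm.sign σ : ℝ) * ∏ i, M (σ i) i| := by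
        rw [Matrix.det_apply]; congr 1; apply Finset.sum_congr rfl; intro σ _
        rw [Units.smul_def, zsmul_eq_mul]
    _ ≤ ∑ σ : Equiv.Perm (Fin k), |(Equiv.Perm.sign σ : ℝ) * ∏ i, M (σ i) i| :=
        Finset.abs_sum_le_sum_abs _ _
    _ ≤ ∑ _σ : Equiv.Perm (Fin k), 1 := by
        apply Finset.sum_le_sum; intro σ _
        rw [abs_mul]
        have hs : |(Equiv.Perm.sign σ : ℝ)| = 1 := by
          rcases Int.units_eq_one_or (Equiv.Perm.sign σ) with h | h <;> rw [h] <;> norm_num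
        rw [hs, one_mul]
        calc |∏ i, M (σ i) i| = ∏ i, |M (σ i) i| := by rw [Finset.abs_prod]
          _ ≤ ∏ _i : Fin k, 1 := Finset.prod_le_prod (fun _ _ => abs_nonneg _) (fun i _ => h1 _ _)
          _ = 1 := by simp
    _ = (Fintype.card (Equiv.Perm (Fin k)) : ℝ) := by simp [Finset.card_univ]
    _ = (k.factorial : ℝ) := by rw [Fintype.card_perm]; simp

lemma abs_det_le_alpha {k : ℕ} {M : Matrix (Fin k) (Fin k) ℝ} (hM : IsZeroOne M) :
    |M.det| ≤ alpha k :=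
  le_csSup (alphaSet_bddAbove k) ⟨M, hM, rfl⟩

lemma alpha_mono {k l : ℕ} (h : k ≤ l) : alpha k ≤ alpha l := by
  apply csSup_le (alphaSet_nonempty k)
  rintro x ⟨M, hM, rfl⟩
  obtain ⟨d, rfl⟩ : ∃ d, l = k + d := ⟨l - k, by omega⟩
  set N : Matrix (Fin (k+d)) (Fin (k+d)) ℝ :=
    (Matrix.reindex finSumFinEquiv finSumFinEquiv)
      (Matrix.fromBlocks M 0 0 (1 : Matrix (Fin d) (Fin d) ℝ)) with hN
  have hN01 : IsZeroOne N := by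
    intro i j
    simp only [hN, Matrix.reindex_apply, Matrix.submatrix_apply]
    rcases (finSumFinEquiv.symm i) with a | a <;> rcases (finSumFinEquiv.symm j) with b | b
    · exact hM a b
    · exact Or.inl rfl
    · exact Or.inl rfl
    · by_cases hab : a = b
      · subst hab; right; simp [Matrix.one_apply]
      · left; simp [Matrix.one_apply, hab]
  have hdet : N.det = M.det := by
    rw [hN, Matrix.det_reindex_self, Matrix.det_fromBlocks_zero₂₁, Matrix.det_one, mul_one]
  calc |M.det| = |N.det| := by rw [hdet]
    _ ≤ alpha (k+d) := abs_det_le_alpha hN01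


-- row flip: if M has an all-ones row r₀, flipping (complementing) a set s of other rows
-- changes det only by sign
lemma det_flip_rows {m : ℕ} (M : Matrix (Fin m) (Fin m) ℝ) (r₀ : Fin m)
    (hr : ∀ j, M r₀ j = 1) (s : Finset (Fin m)) (hs : r₀ ∉ s) :
    |(Matrix.of fun i j => if i ∈ s then 1 - M i j else M i j).det| = |M.det| := by
  classical
  induction s using Finset.induction_on with
  | empty =>
    have h : (Matrix.of fun i j => if i ∈ (∅ : Finset (Fin m)) then 1 - M i j else M i j) = M := by
      ext i j; simp
    rw [h]
  | @insert a s ha ih =>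
    have hr₀a : r₀ ≠ a := fun h => hs (h ▸ Finset.mem_insert_self a s)
    have hr₀s : r₀ ∉ s := fun h => hs (Finset.mem_insert_of_mem h)
    set G : Matrix (Fin m) (Fin m) ℝ := Matrix.of fun i j => if i ∈ s then 1 - M i j else M i j
      with hG
    have key : (Matrix.of fun i j => if i ∈ insert a s then 1 - M i j else M i j)
        = G.updateRow a (fun j => 1 - M a j) := by
      ext i j
      by_cases hia : i = a
      · subst hia
        simp [Matrix.updateRow_self, Finset.mem_insert_self]
      · simp only [Matrix.of_apply, Matrix.updateRow_ne hia, hG]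
        by_cases his : i ∈ s <;> simp [Finset.mem_insert, hia, his]
    rw [key]
    have expand : (G.updateRow a (fun j => 1 - M a j)).det
        = (G.updateRow a (fun _ => (1:ℝ))).det - (G.updateRow a (M a)).det := by
      have h1 : (fun j => 1 - M a j) = (fun _ => (1:ℝ)) + (-1 : ℝ) • (M a) := by
        funext j; simp; ring
      rw [h1, Matrix.det_updateRow_add, Matrix.det_updateRow_smul]
      ring
    have hones : (G.updateRow a (fun _ => (1:ℝ))).det = 0 := by
      apply Matrix.det_zero_of_row_eq hr₀a.symm
      rw [Matrix.updateRow_self, Matrix.updateRow_ne hr₀a]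
      funext j; simp [hG, hr₀s, hr]
    have hMa : G.updateRow a (M a) = G := by
      have : G a = M a := by funext j; simp [hG, ha]
      rw [← this, Matrix.updateRow_eq_self]
    rw [expand, hones, hMa, zero_sub, abs_neg]
    exact ih hr₀s

/-- A 0-1 matrix of size k+1 with an all-ones row has |det| equal to that of some
0-1 matrix of size k. -/
lemma exists_smaller_of_ones_row {k : ℕ} (M : Matrix (Fin (k+1)) (Fin (k+1)) ℝ)
    (h01 : ∀ i j, M i j = 0 ∨ M i j = 1) (r₀ : Fin (k+1)) (hr : ∀ j, M r₀ j = 1) :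
    ∃ M₀ : Matrix (Fin k) (Fin k) ℝ, (∀ i j, M₀ i j = 0 ∨ M₀ i j = 1) ∧ |M.det| = |M₀.det| := by
  classical
  set s : Finset (Fin (k+1)) := Finset.univ.filter (fun i => i ≠ r₀ ∧ M i 0 = 1) with hsdef
  have hs : r₀ ∉ s := by simp [hsdef]
  set G : Matrix (Fin (k+1)) (Fin (k+1)) ℝ :=
    Matrix.of fun i j => if i ∈ s then 1 - M i j else M i j with hG
  have habs : |G.det| = |M.det| := det_flip_rows M r₀ hr s hs
  have hG01 : ∀ i j, G i j = 0 ∨ G i j = 1 := by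
    intro i j
    simp only [hG, Matrix.of_apply]
    by_cases h : i ∈ s
    · rw [if_pos h]; rcases h01 i j with h' | h' <;> rw [h'] <;> [right; left] <;> ring
    · rw [if_neg h]; exact h01 i j
  have hcol : ∀ i, G i 0 = if i = r₀ then 1 else 0 := by
    intro i
    by_cases hir : i = r₀
    · subst hir; simp [hG, hs, hr]
    · simp only [hG, Matrix.of_apply]
      by_cases hm : M i 0 = 1
      · have : i ∈ s := by simp [hsdef, hir, hm]
        rw [if_pos this, if_neg hir, hm]; ring
      · have : i ∉ s := by simp [hsdef, hir, hm]
        rw [if_neg this, if_neg hir]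
        rcases h01 i 0 with h' | h'
        · exact h'
        · exact absurd h' hm
  -- expand det G along column 0
  have hdet : G.det = (-1 : ℝ)^(r₀ : ℕ) * (G.submatrix r₀.succAbove (Fin.succAbove 0)).det := by
    rw [Matrix.det_succ_column G 0]
    rw [Finset.sum_eq_single r₀]
    · rw [hcol r₀, if_pos rfl]; simp [Fin.val_zero]
    · intro i _ hir
      rw [hcol i, if_neg hir]; ring
    · intro h; exact absurd (Finset.mem_univ r₀) h
  refine ⟨G.submatrix r₀.succAbove (Fin.succAbove 0), fun i j => hG01 _ _, ?_⟩
  rw [← habs, hdet, abs_mul, abs_pow, abs_neg, abs_one, one_pow, one_mul]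


lemma trading_sum_eq {n j : ℕ} (w : Fin n → ℝ) (X Y : Fin j → Finset (Fin n))
    (ht : IsTradingTransform X Y) :
    ∑ i : Fin j, ∑ p ∈ X i, w p = ∑ i : Fin j, ∑ p ∈ Y i, w p := by
  classical
  have key : ∀ Z : Fin j → Finset (Fin n),
      ∑ i : Fin j, ∑ p ∈ Z i, w p
        = ∑ p : Fin n, ((Finset.univ.filter fun i => p ∈ Z i).card : ℝ) * w p := by
    intro Z
    have h1 : ∀ i, ∑ p ∈ Z i, w p = ∑ p : Fin n, if p ∈ Z i then w p else 0 := by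
      intro i
      rw [← Finset.sum_filter]
      congr 1
      ext p; simp
    simp_rw [h1]
    rw [Finset.sum_comm]
    congr 1
    funext p
    rw [← Finset.sum_filter, Finset.sum_const, nsmul_eq_mul]
  rw [key X, key Y]
  congr 1; funext p; rw [ht p]

lemma weighted_implies_robust {n : ℕ} (W : Set (Finset (Fin n)))
    (h : ∃ (w : Fin n → ℝ) (q : ℝ), ∀ S : Finset (Fin n), S ∈ W ↔ q ≤ ∑ i ∈ S, w i)
    (k : ℝ) :
    ¬ ∃ (j : ℕ) (X Y : Fin j → Finset (Fin n)),
      1 ≤ j ∧ (j : ℝ) ≤ k ∧ IsTradingTransform X Y ∧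
      (∀ i, X i ∈ W) ∧ (∀ i, Y i ∉ W) := by
  rintro ⟨j, X, Y, hj, -, ht, hX, hY⟩
  obtain ⟨w, q, hw⟩ := h
  have hne : (Finset.univ : Finset (Fin j)).Nonempty := by
    rw [Finset.univ_nonempty_iff]
    exact Fin.pos_iff_nonempty.mp (by omega)
  have h1 : ∑ i : Fin j, q ≤ ∑ i : Fin j, ∑ p ∈ X i, w p :=
    Finset.sum_le_sum (fun i _ => (hw (X i)).mp (hX i))
  have h2 : ∑ i : Fin j, ∑ p ∈ Y i, w p < ∑ i : Fin j, q := by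
    apply Finset.sum_lt_sum_of_nonempty hne
    intro i _
    have := hY i
    rw [hw (Y i)] at this
    linarith [not_le.mp this]
  rw [trading_sum_eq w X Y ht] at h1
  linarith


section Cone
variable {E : Type*} [NormedAddCommGroup E] [InnerProductSpace ℝ E] [FiniteDimensional ℝ E]
variable {ι : Type*} [Fintype ι]

lemma sum_support_smul [DecidableEq ι] (v : ι → E) (u : Finset ι) (c : ι → ℝ)
    (hsupp : ∀ i ∉ u, c i = 0) :
    ∑ i, c i • v i = ∑ i : u, c i • v (i : ι) := by
  rw [Finset.sum_coe_sort u (fun i => c i • v i)]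
  exact (Finset.sum_subset (Finset.subset_univ u)
    (fun x _ hx => by rw [hsupp x hx, zero_smul])).symm

lemma carath_aux (v : ι → E) :
    ∀ (N : ℕ) (t : Finset ι) (c : ι → ℝ), t.card ≤ N → (∀ i, 0 ≤ c i) → (∀ i ∉ t, c i = 0) →
    ∃ (u : Finset ι) (c' : ι → ℝ), (∀ i, 0 ≤ c' i) ∧ (∀ i ∉ u, c' i = 0) ∧
      (LinearIndependent ℝ (fun i : u => v (i : ι))) ∧ ∑ i, c' i • v i = ∑ i, c i • v i := by
  classical
  intro N
  induction N with
  | zero =>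
    intro t c hcard hc hsupp
    have ht : t = ∅ := Finset.card_eq_zero.mp (Nat.le_zero.mp hcard)
    subst ht
    refine ⟨∅, c, hc, hsupp, ?_, rfl⟩
    haveI : IsEmpty ((∅ : Finset ι) : Type _) := ⟨fun x => absurd x.2 (Finset.notMem_empty x.1)⟩
    exact linearIndependent_empty_type
  | succ N ih =>
    intro t c hcard hc hsupp
    by_cases hli : LinearIndependent ℝ (fun i : t => v (i : ι))
    · exact ⟨t, c, hc, hsupp, hli, rfl⟩
    · obtain ⟨g, hgsum, i₁, hg₁⟩ := Fintype.not_linearIndependent_iff.mp hli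
      set gg : ι → ℝ := fun i => if h : i ∈ t then g ⟨i, h⟩ else 0 with hgg
      have hggsupp : ∀ i ∉ t, gg i = 0 := fun i hi => dif_neg hi
      have hggsum : ∑ i, gg i • v i = 0 := by
        rw [sum_support_smul v t gg hggsupp, ← hgsum]
        apply Finset.sum_congr rfl
        intro x _
        congr 1
        exact dif_pos x.2
      have hggne : gg (i₁ : ι) ≠ 0 := by
        rw [hgg]; simpa [dif_pos i₁.2] using hg₁
      obtain ⟨G, hGsum, hGsupp, iP, hiPpos⟩ :
          ∃ G : ι → ℝ, (∑ i, G i • v i = 0) ∧ (∀ i ∉ t, G i = 0) ∧ ∃ i, 0 < G i := by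
        rcases lt_or_gt_of_ne hggne with hneg | hpos
        · exact ⟨-gg, by simpa using hggsum, fun i hi => by simp [hggsupp i hi], i₁, by
            simpa using hneg⟩
        · exact ⟨gg, hggsum, hggsupp, i₁, hpos⟩
      have hiPt : iP ∈ t := by
        by_contra h
        rw [hGsupp iP h] at hiPpos
        exact lt_irrefl 0 hiPpos
      set P : Finset ι := t.filter (fun i => 0 < G i) with hP
      have hPne : P.Nonempty := ⟨iP, by simp [hP, hiPt, hiPpos]⟩
      obtain ⟨i₀, hi₀P, hmin⟩ := Finset.exists_min_image P (fun i => c i / G i) hPne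
      have hi₀t : i₀ ∈ t := (Finset.mem_filter.mp hi₀P).1
      have hGi₀ : 0 < G i₀ := (Finset.mem_filter.mp hi₀P).2
      set r : ℝ := c i₀ / G i₀ with hrdef
      have hr0 : 0 ≤ r := div_nonneg (hc i₀) hGi₀.le
      set c'' : ι → ℝ := fun i => c i - r * G i with hc''
      have hc''nonneg : ∀ i, 0 ≤ c'' i := by
        intro i
        by_cases hit : i ∈ t
        · by_cases hGi : 0 < G i
          · have hiP : i ∈ P := Finset.mem_filter.mpr ⟨hit, hGi⟩
            have h1 := hmin i hiP
            have h2 : r * G i ≤ (c i / G i) * G i :=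
              mul_le_mul_of_nonneg_right h1 hGi.le
            rw [div_mul_cancel₀ _ (ne_of_gt hGi)] at h2
            simp only [hc'']
            linarith
          · have h1 : r * G i ≤ 0 := mul_nonpos_of_nonneg_of_nonpos hr0 (not_lt.mp hGi)
            have h2 := hc i
            simp only [hc'']
            linarith
        · simp only [hc'', hsupp i hit, hGsupp i hit]
          norm_num
      have hc''i₀ : c'' i₀ = 0 := by
        simp only [hc'', hrdef]
        rw [div_mul_cancel₀ _ (ne_of_gt hGi₀)]
        ring
      have hc''supp : ∀ i ∉ t.erase i₀, c'' i = 0 := by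
        intro i hi
        by_cases hit : i ∈ t
        · have : i = i₀ := by
            by_contra hne
            exact hi (Finset.mem_erase.mpr ⟨hne, hit⟩)
          rw [this]; exact hc''i₀
        · simp only [hc'', hsupp i hit, hGsupp i hit]; ring
      have hsum'' : ∑ i, c'' i • v i = ∑ i, c i • v i := by
        have h1 : ∑ i, c'' i • v i = ∑ i, c i • v i - r • ∑ i, G i • v i := by
          rw [Finset.smul_sum, ← Finset.sum_sub_distrib]
          apply Finset.sum_congr rfl
          intro i _
          rw [smul_smul, ← sub_smul]
        rw [h1, hGsum, smul_zero, sub_zero]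
      have hcard' : (t.erase i₀).card ≤ N := by
        rw [Finset.card_erase_of_mem hi₀t]
        have : 1 ≤ t.card := Finset.card_pos.mpr ⟨i₀, hi₀t⟩
        omega
      obtain ⟨u, c', h1, h2, h3, h4⟩ := ih (t.erase i₀) c'' hcard' hc''nonneg hc''supp
      exact ⟨u, c', h1, h2, h3, by rw [h4, hsum'']⟩

lemma isClosed_cone_fg (v : ι → E) :
    IsClosed {x : E | ∃ c : ι → ℝ, (∀ i, 0 ≤ c i) ∧ x = ∑ i, c i • v i} := by
  classical
  have hunion : {x : E | ∃ c : ι → ℝ, (∀ i, 0 ≤ c i) ∧ x = ∑ i, c i • v i}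
      = ⋃ u : Finset ι, {x : E | LinearIndependent ℝ (fun i : u => v (i : ι)) ∧
          ∃ c : ι → ℝ, (∀ i, 0 ≤ c i) ∧ (∀ i ∉ u, c i = 0) ∧ x = ∑ i, c i • v i} := by
    ext x
    constructor
    · rintro ⟨c, hc, rfl⟩
      obtain ⟨u, c', h1, h2, h3, h4⟩ :=
        carath_aux v (Finset.univ.card) Finset.univ c le_rfl hc
          (fun i hi => absurd (Finset.mem_univ i) hi)
      exact Set.mem_iUnion.mpr ⟨u, h3, c', h1, h2, h4.symm⟩
    · intro hx
      obtain ⟨u, _, c, hc, _, rfl⟩ := Set.mem_iUnion.mp hx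
      exact ⟨c, hc, rfl⟩
  rw [hunion]
  apply isClosed_iUnion_of_finite
  intro u
  by_cases h : LinearIndependent ℝ (fun i : u => v (i : ι))
  · set φ : (u → ℝ) →ₗ[ℝ] E := (Fintype.linearCombination ℝ) (fun i : u => v (i : ι)) with hφ
    have hφapp : ∀ c : u → ℝ, φ c = ∑ i : u, c i • v (i : ι) := by
      intro c
      rw [hφ, Fintype.linearCombination_apply]
    have hker : LinearMap.ker φ = ⊥ := by
      rw [LinearMap.ker_eq_bot']
      intro m hm
      rw [hφapp] at hm
      funext i
      exact Fintype.linearIndependent_iff.mp h m hm i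
    have hemb := LinearMap.isClosedEmbedding_of_injective hker
    have himg : {x : E | LinearIndependent ℝ (fun i : u => v (i : ι)) ∧
          ∃ c : ι → ℝ, (∀ i, 0 ≤ c i) ∧ (∀ i ∉ u, c i = 0) ∧ x = ∑ i, c i • v i}
        = φ '' {c : u → ℝ | ∀ i, 0 ≤ c i} := by
      ext x
      constructor
      · rintro ⟨-, c, hc, hsupp, rfl⟩
        refine ⟨fun i => c i, fun i => hc i, ?_⟩
        rw [hφapp]
        exact (sum_support_smul v u c hsupp).symm
      · rintro ⟨c', hc', rfl⟩
        refine ⟨h, fun i => if hh : i ∈ u then c' ⟨i, hh⟩ else 0, ?_, ?_, ?_⟩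
        · intro i
          by_cases hh : i ∈ u
          · simp only [dif_pos hh]; exact hc' _
          · simp only [dif_neg hh]; exact le_rfl
        · intro i hi; simp only [dif_neg hi]
        · rw [hφapp, sum_support_smul v u _ (fun i hi => dif_neg hi)]
          apply Finset.sum_congr rfl
          intro i _
          rw [dif_pos i.2]
    rw [himg]
    apply hemb.isClosedMap
    have hset : {c : u → ℝ | ∀ i, 0 ≤ c i} = ⋂ i, (fun c : u → ℝ => c i) ⁻¹' Set.Ici 0 := by
      ext c; simp [Set.mem_iInter]
    rw [hset]
    exact isClosed_iInter (fun i => isClosed_Ici.preimage (continuous_apply i))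
  · have : {x : E | LinearIndependent ℝ (fun i : u => v (i : ι)) ∧
          ∃ c : ι → ℝ, (∀ i, 0 ≤ c i) ∧ (∀ i ∉ u, c i = 0) ∧ x = ∑ i, c i • v i} = ∅ := by
      ext x; simp only [Set.mem_setOf_eq, Set.mem_empty_iff_false, iff_false]
      rintro ⟨hli, -⟩
      exact h hli
    rw [this]
    exact isClosed_empty
end Cone


lemma motzkin {ν ι κ : Type*} [Fintype ν] [Fintype ι] [Fintype κ]
    (a : ι → ν → ℝ) (b : κ → ν → ℝ)
    (h : ¬ ∃ x : ν → ℝ, (∀ i, 0 ≤ ∑ r, a i r * x r) ∧ (∀ t, 0 < ∑ r, b t r * x r)) :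
    ∃ (lam : ι → ℝ) (mu : κ → ℝ), (∀ i, 0 ≤ lam i) ∧ (∀ t, 0 ≤ mu t) ∧ (∑ t, mu t = 1) ∧
      (∀ r, ∑ i, lam i * a i r + ∑ t, mu t * b t r = 0) := by
  classical
  set w : ι ⊕ κ → EuclideanSpace ℝ (Option ν) := Sum.elim
    (fun i => WithLp.toLp 2 (fun o => o.elim 0 (a i) : Option ν → ℝ))
    (fun t => WithLp.toLp 2 (fun o => o.elim 1 (b t) : Option ν → ℝ)) with hw
  have hw1 : ∀ i, w (Sum.inl i) none = (0:ℝ) := fun i => rfl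
  have hw2 : ∀ i p, w (Sum.inl i) (some p) = a i p := fun i p => rfl
  have hw3 : ∀ t, w (Sum.inr t) none = (1:ℝ) := fun t => rfl
  have hw4 : ∀ t p, w (Sum.inr t) (some p) = b t p := fun t p => rfl
  have hcoord : ∀ (x : EuclideanSpace ℝ (Option ν)) (r : Option ν),
      (inner ℝ x (EuclideanSpace.single r (1:ℝ)) : ℝ) = x r := by
    intro x r
    rw [EuclideanSpace.inner_single_right]
    simp
  set Kset : Set (EuclideanSpace ℝ (Option ν)) :=
    {x | ∃ c : ι ⊕ κ → ℝ, (∀ g, 0 ≤ c g) ∧ x = ∑ g, c g • w g} with hKset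
  set β : EuclideanSpace ℝ (Option ν) := EuclideanSpace.single none (1:ℝ) with hβ
  by_cases hmem : β ∈ Kset
  · obtain ⟨c, hc, hx⟩ := hmem
    have hco : ∀ r : Option ν, β r = ∑ g, c g * (w g) r := by
      intro r
      have h1 : (inner ℝ β (EuclideanSpace.single r (1:ℝ)) : ℝ)
          = inner ℝ (∑ g, c g • w g) (EuclideanSpace.single r (1:ℝ)) := by rw [← hx]
      rw [hcoord, sum_inner] at h1
      simp_rw [real_inner_smul_left, hcoord] at h1
      exact h1
    have hβnone : β none = 1 := by simp [hβ, EuclideanSpace.single_apply]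
    have hβsome : ∀ p, β (some p) = 0 := by
      intro p; simp [hβ, EuclideanSpace.single_apply]
    refine ⟨fun i => c (Sum.inl i), fun t => c (Sum.inr t),
      fun i => hc _, fun t => hc _, ?_, ?_⟩
    · have := hco none
      rw [hβnone, Fintype.sum_sum_type] at this
      simp_rw [hw1, hw3, mul_zero, mul_one] at this
      simp only [Finset.sum_const_zero, zero_add] at this
      exact this.symm
    · intro p
      have := hco (some p)
      rw [hβsome, Fintype.sum_sum_type] at this
      simp_rw [hw2, hw4] at this
      exact this.symm
  · set K : ConvexCone ℝ (EuclideanSpace ℝ (Option ν)) :=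
      { carrier := Kset
        smul_mem' := by
          rintro t ht x ⟨cf, hcf, rfl⟩
          refine ⟨fun g => t * cf g, fun g => mul_nonneg ht.le (hcf g), ?_⟩
          rw [Finset.smul_sum]
          apply Finset.sum_congr rfl
          intro g _
          rw [smul_smul]
        add_mem' := by
          rintro x ⟨cf, hcf, rfl⟩ y ⟨cg, hcg, rfl⟩
          refine ⟨fun g => cf g + cg g, fun g => add_nonneg (hcf g) (hcg g), ?_⟩
          rw [← Finset.sum_add_distrib]
          apply Finset.sum_congr rfl
          intro g _
          rw [add_smul] } with hK
    have hKne : (K : Set (EuclideanSpace ℝ (Option ν))).Nonempty :=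
      ⟨0, ⟨fun _ => 0, fun _ => le_rfl, by simp⟩⟩
    have hKclosed : IsClosed (K : Set (EuclideanSpace ℝ (Option ν))) := isClosed_cone_fg w
    set PC : ProperCone ℝ (EuclideanSpace ℝ (Option ν)) :=
      { carrier := Kset
        add_mem' := fun {x y} hx hy => K.add_mem hx hy
        zero_mem' := ⟨fun _ => 0, fun _ => le_rfl, by simp⟩
        smul_mem' := by
          rintro c x ⟨cf, hcf, rfl⟩
          refine ⟨fun g => (c : ℝ) * cf g, fun g => mul_nonneg c.2 (hcf g), ?_⟩
          show (c : ℝ) • ∑ g, cf g • w g = _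
          rw [Finset.smul_sum]
          apply Finset.sum_congr rfl
          intro g _
          rw [smul_smul]
        isClosed' := hKclosed } with hPC
    obtain ⟨y, hy1, hy2⟩ :=
      ProperCone.hyperplane_separation' PC (show β ∉ PC from hmem)
    have hynone : y none < 0 := by
      rw [hβ, EuclideanSpace.inner_single_left] at hy2
      simpa using hy2
    have hgen : ∀ g, (0:ℝ) ≤ inner ℝ (w g) y := by
      intro g
      apply hy1
      show w g ∈ Kset
      refine ⟨Pi.single g 1, ?_, ?_⟩
      · intro g'
        by_cases hg : g' = g
        · subst hg; simp
        · simp [Pi.single_eq_of_ne hg]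
      · rw [Finset.sum_eq_single g]
        · simp
        · intro g' _ hg'
          simp [Pi.single_eq_of_ne hg']
        · intro hg; exact absurd (Finset.mem_univ g) hg
    have hinner : ∀ g, (inner ℝ (w g) y : ℝ) = w g none * y none + ∑ p, w g (some p) * y (some p) := by
      intro g
      rw [PiLp.inner_apply]
      simp_rw [RCLike.inner_apply, conj_trivial]
      rw [Fintype.sum_option]
      simp only [mul_comm]
    exfalso
    apply h
    refine ⟨fun p => y (some p), ?_, ?_⟩
    · intro i
      have := hgen (Sum.inl i)
      rw [hinner] at this
      rw [hw1, zero_mul, zero_add] at this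
      simp_rw [hw2] at this
      exact this
    · intro t
      have := hgen (Sum.inr t)
      rw [hinner] at this
      rw [hw3, one_mul] at this
      simp_rw [hw4] at this
      linarith


/-- coalition incidence vector, with a constant-1 extra coordinate -/
def Rfun {n : ℕ} (S : Finset (Fin n)) : Option (Fin n) → ℝ :=
  fun o => o.elim 1 (fun p => if p ∈ S then 1 else 0)

lemma Rfun_none {n : ℕ} (S : Finset (Fin n)) : Rfun S none = 1 := rfl
lemma Rfun_some {n : ℕ} (S : Finset (Fin n)) (p : Fin n) :
    Rfun S (some p) = if p ∈ S then 1 else 0 := rfl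
lemma Rfun_zero_one {n : ℕ} (S : Finset (Fin n)) (r : Option (Fin n)) :
    Rfun S r = 0 ∨ Rfun S r = 1 := by
  cases r with
  | none => right; rfl
  | some p =>
    rw [Rfun_some]
    by_cases h : p ∈ S
    · right; rw [if_pos h]
    · left; rw [if_neg h]

lemma sum_ite_mul {n : ℕ} (S : Finset (Fin n)) (w : Fin n → ℝ) :
    ∑ p : Fin n, (if p ∈ S then (1:ℝ) else 0) * w p = ∑ p ∈ S, w p := by
  simp_rw [ite_mul, one_mul, zero_mul]
  rw [← Finset.sum_filter, Finset.filter_univ_mem]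

lemma exists_cert {n : ℕ} (W : Set (Finset (Fin n))) (hnw : ¬IsWeighted W) :
    ∃ y : Finset (Fin n) → ℝ, (∀ S ∈ W, 0 ≤ y S) ∧ (∀ S ∉ W, y S ≤ 0) ∧
      (∀ r, ∑ S, y S * Rfun S r = 0) ∧ ∃ S, y S ≠ 0 := by
  classical
  set a : {S : Finset (Fin n) // S ∈ W} → Option (Fin n) → ℝ :=
    fun S o => o.elim (-1) (fun p => if p ∈ S.1 then 1 else 0) with ha
  set b : {S : Finset (Fin n) // S ∉ W} → Option (Fin n) → ℝ :=
    fun T o => o.elim 1 (fun p => if p ∈ T.1 then -1 else 0) with hb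
  have hsuma : ∀ (S : {S : Finset (Fin n) // S ∈ W}) (x : Option (Fin n) → ℝ),
      ∑ r, a S r * x r = (∑ p ∈ S.1, x (some p)) - x none := by
    intro S x
    rw [Fintype.sum_option]
    have h2 : ∀ p, a S (some p) * x (some p)
        = (if p ∈ S.1 then (1:ℝ) else 0) * x (some p) := fun p => rfl
    simp_rw [h2]
    rw [sum_ite_mul S.1 (fun p => x (some p))]
    have h3 : a S none = -1 := rfl
    rw [h3]; ring
  have hsumb : ∀ (T : {S : Finset (Fin n) // S ∉ W}) (x : Option (Fin n) → ℝ),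
      ∑ r, b T r * x r = x none - ∑ p ∈ T.1, x (some p) := by
    intro T x
    rw [Fintype.sum_option]
    have h1 : ∀ p, b T (some p) * x (some p)
        = -((if p ∈ T.1 then (1:ℝ) else 0) * x (some p)) := by
      intro p
      show (if p ∈ T.1 then (-1:ℝ) else 0) * x (some p) = _
      by_cases h : p ∈ T.1 <;> simp [h]
    simp_rw [h1]
    rw [Finset.sum_neg_distrib, sum_ite_mul T.1 (fun p => x (some p))]
    have h3 : b T none = 1 := rfl
    rw [h3]; ring
  have hfeas : ¬ ∃ x : Option (Fin n) → ℝ,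
      (∀ S, 0 ≤ ∑ r, a S r * x r) ∧ (∀ T, 0 < ∑ r, b T r * x r) := by
    rintro ⟨x, hxa, hxb⟩
    apply hnw
    refine ⟨fun p => x (some p), x none, fun S => ⟨fun hS => ?_, fun hq => ?_⟩⟩
    · have := hxa ⟨S, hS⟩
      rw [hsuma] at this
      linarith
    · by_contra hS
      have := hxb ⟨S, hS⟩
      rw [hsumb] at this
      linarith
  obtain ⟨lam, mu, hlam, hmu, hmusum, hrel⟩ := motzkin a b hfeas
  set y : Finset (Fin n) → ℝ := fun S => if h : S ∈ W then lam ⟨S, h⟩ else -mu ⟨S, h⟩ with hy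
  have hyW : ∀ S (h : S ∈ W), y S = lam ⟨S, h⟩ := fun S h => dif_pos h
  have hyL : ∀ S (h : S ∉ W), y S = -mu ⟨S, h⟩ := fun S h => dif_neg h
  have hsplit : ∀ f : Finset (Fin n) → ℝ,
      ∑ S, f S = (∑ S : {S : Finset (Fin n) // S ∈ W}, f S.1)
        + ∑ T : {S : Finset (Fin n) // S ∉ W}, f T.1 := by
    intro f
    rw [← Finset.sum_filter_add_sum_filter_not Finset.univ (· ∈ W) f]
    congr 1
    · rw [← Finset.sum_subtype (Finset.univ.filter (· ∈ W)) (fun S => by simp) f]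
    · rw [← Finset.sum_subtype (Finset.univ.filter (· ∉ W)) (fun S => by simp) f]
  refine ⟨y, ?_, ?_, ?_, ?_⟩
  · intro S hS; rw [hyW S hS]; exact hlam _
  · intro S hS; rw [hyL S hS]; simpa using hmu _
  · intro r
    have h1 := hrel r
    rw [hsplit (fun S => y S * Rfun S r)]
    cases r with
    | none =>
      have e1 : ∀ S : {S : Finset (Fin n) // S ∈ W}, y S.1 * Rfun S.1 none = lam S := by
        intro S; rw [hyW S.1 S.2, Rfun_none, mul_one]
      have e2 : ∀ T : {S : Finset (Fin n) // S ∉ W}, y T.1 * Rfun T.1 none = -mu T := by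
        intro T; rw [hyL T.1 T.2, Rfun_none, mul_one]
      have f1 : ∀ S : {S : Finset (Fin n) // S ∈ W}, lam S * a S none = -lam S := by
        intro S; show lam S * (-1) = _; ring
      have f2 : ∀ T : {S : Finset (Fin n) // S ∉ W}, mu T * b T none = mu T := by
        intro T; show mu T * 1 = _; ring
      simp_rw [f1, f2] at h1
      simp_rw [e1, e2]
      rw [Finset.sum_neg_distrib] at h1 ⊢
      linarith
    | some p =>
      have e1 : ∀ S : {S : Finset (Fin n) // S ∈ W},
          y S.1 * Rfun S.1 (some p) = lam S * a S (some p) := by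
        intro S; rw [hyW S.1 S.2]; rfl
      have e2 : ∀ T : {S : Finset (Fin n) // S ∉ W},
          y T.1 * Rfun T.1 (some p) = mu T * b T (some p) := by
        intro T; rw [hyL T.1 T.2]
        show -mu T * (if p ∈ T.1 then (1:ℝ) else 0) = mu T * (if p ∈ T.1 then (-1:ℝ) else 0)
        by_cases h : p ∈ T.1 <;> simp [h]
      simp_rw [e1, e2]
      exact h1
  · have hT : ∃ T, mu T ≠ 0 := by
      by_contra h
      push_neg at h
      rw [Finset.sum_eq_zero (fun t _ => h t)] at hmusum
      norm_num at hmusum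
    obtain ⟨T, hTne⟩ := hT
    exact ⟨T.1, by rw [hyL T.1 T.2]; simpa using hTne⟩


lemma exists_min_cert {n : ℕ} (W : Set (Finset (Fin n)))
    (hnw : ¬∃ (w : Fin n → ℝ) (q : ℝ), ∀ S : Finset (Fin n), S ∈ W ↔ q ≤ ∑ i ∈ S, w i) :
    ∃ y : Finset (Fin n) → ℝ, (∀ S ∈ W, 0 ≤ y S) ∧ (∀ S ∉ W, y S ≤ 0) ∧
      (∀ r, ∑ S, y S * Rfun S r = 0) ∧ (∃ S, y S ≠ 0) ∧
      (∀ y' : Finset (Fin n) → ℝ, (∀ r, ∑ S, y' S * Rfun S r = 0) →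
        (∀ S, y S = 0 → y' S = 0) → ∃ t : ℝ, ∀ S, y' S = t * y S) := by
  classical
  set P : (Finset (Fin n) → ℝ) → Prop := fun y =>
    (∀ S ∈ W, 0 ≤ y S) ∧ (∀ S ∉ W, y S ≤ 0) ∧
      (∀ r, ∑ S, y S * Rfun S r = 0) ∧ ∃ S, y S ≠ 0 with hP
  set cardOf : (Finset (Fin n) → ℝ) → ℕ :=
    fun y => (Finset.univ.filter (fun S => y S ≠ 0)).card with hcardOf
  set Q : Set ℕ := {k | ∃ y, P y ∧ cardOf y = k} with hQ
  have hQne : Q.Nonempty := by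
    obtain ⟨y, h1, h2, h3, h4⟩ := exists_cert W hnw
    exact ⟨cardOf y, y, ⟨h1, h2, h3, h4⟩, rfl⟩
  obtain ⟨y, hPy, hycard⟩ : ∃ y, P y ∧ cardOf y = sInf Q := Nat.sInf_mem hQne
  obtain ⟨hsign1, hsign2, hrel, hne⟩ := hPy
  refine ⟨y, hsign1, hsign2, hrel, hne, ?_⟩
  intro y' hrel' hsupp'
  by_cases hy'0 : y' = 0
  · exact ⟨0, fun S => by rw [hy'0]; simp⟩
  · have hy'ne : ∃ S, y' S ≠ 0 := by
      by_contra h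
      push_neg at h
      exact hy'0 (funext h)
    obtain ⟨S₁, hS₁⟩ := hy'ne
    set P' : Finset (Finset (Fin n)) := Finset.univ.filter (fun S => y' S ≠ 0) with hP'
    have hP'ne : P'.Nonempty := ⟨S₁, by simp [hP', hS₁]⟩
    obtain ⟨i₀, hi₀P, hmin'⟩ := Finset.exists_min_image P' (fun S => |y S / y' S|) hP'ne
    have hy'i₀ : y' i₀ ≠ 0 := by
      have := (Finset.mem_filter.mp hi₀P).2
      simpa using this
    set t : ℝ := y i₀ / y' i₀ with ht
    set z : Finset (Fin n) → ℝ := fun S => y S - t * y' S with hz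
    have hzi₀ : z i₀ = 0 := by
      simp only [hz, ht]
      rw [div_mul_cancel₀ _ hy'i₀]
      ring
    have habs : ∀ S, y' S ≠ 0 → |t * y' S| ≤ |y S| := by
      intro S hS
      have h1 : |t| ≤ |y S| / |y' S| := by
        have h0 := hmin' S (by simp [hP', hS])
        rw [← abs_div]
        exact h0
      rw [abs_mul]
      calc |t| * |y' S| ≤ (|y S| / |y' S|) * |y' S| :=
            mul_le_mul_of_nonneg_right h1 (abs_nonneg _)
        _ = |y S| := div_mul_cancel₀ _ (abs_ne_zero.mpr hS)
    have hzsign1 : ∀ S ∈ W, 0 ≤ z S := by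
      intro S hS
      by_cases hS' : y' S = 0
      · simp only [hz, hS', mul_zero, sub_zero]; exact hsign1 S hS
      · have h1 := habs S hS'
        have h2 := le_abs_self (t * y' S)
        have h3 := hsign1 S hS
        have h4 : |y S| = y S := abs_of_nonneg h3
        simp only [hz]
        linarith [h4 ▸ h1, h2]
    have hzsign2 : ∀ S ∉ W, z S ≤ 0 := by
      intro S hS
      by_cases hS' : y' S = 0
      · simp only [hz, hS', mul_zero, sub_zero]; exact hsign2 S hS
      · have h1 := habs S hS'
        have h2 := neg_abs_le (t * y' S)
        have h3 := hsign2 S hS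
        have h4 : |y S| = -y S := abs_of_nonpos h3
        simp only [hz]
        rw [h4] at h1
        linarith
    have hzrel : ∀ r, ∑ S, z S * Rfun S r = 0 := by
      intro r
      have : ∑ S, z S * Rfun S r
          = ∑ S, y S * Rfun S r - t * ∑ S, y' S * Rfun S r := by
        rw [Finset.mul_sum, ← Finset.sum_sub_distrib]
        apply Finset.sum_congr rfl
        intro S _
        simp only [hz]
        ring
      rw [this, hrel r, hrel' r]
      ring
    have hzsupp : ∀ S, y S = 0 → z S = 0 := by
      intro S hSy
      simp only [hz, hSy, hsupp' S hSy]
      ring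
    have hyi₀ : y i₀ ≠ 0 := by
      intro h
      exact hy'i₀ (hsupp' i₀ h)
    have hzcard : cardOf z < sInf Q := by
      rw [← hycard]
      apply Finset.card_lt_card
      rw [Finset.ssubset_iff_of_subset]
      · exact ⟨i₀, by simp [hcardOf, hyi₀], by simp [hcardOf, hzi₀]⟩
      · intro S hS
        simp only [hcardOf, Finset.mem_filter, Finset.mem_univ, true_and] at hS ⊢
        intro h
        exact hS (hzsupp S h)
    have hz0 : z = 0 := by
      by_contra hzne
      have hzP : P z := by
        refine ⟨hzsign1, hzsign2, hzrel, ?_⟩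
        by_contra h
        push_neg at h
        exact hzne (funext h)
      have : cardOf z ∈ Q := ⟨z, hzP, rfl⟩
      exact absurd (Nat.sInf_le this) (not_le.mpr hzcard)
    have hty : ∀ S, y S = t * y' S := by
      intro S
      have := congrFun hz0 S
      simp only [hz, Pi.zero_apply] at this
      linarith
    have htne : t ≠ 0 := by
      intro h
      obtain ⟨S, hS⟩ := hne
      rw [hty S, h, zero_mul] at hS
      exact hS rfl
    refine ⟨t⁻¹, fun S => ?_⟩
    rw [hty S]
    field_simp


theorem exists_trading_certificate {n : ℕ} (W : Set (Finset (Fin n)))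
    (hnw : ¬∃ (w : Fin n → ℝ) (q : ℝ), ∀ S : Finset (Fin n), S ∈ W ↔ q ≤ ∑ i ∈ S, w i) :
    ∃ (j : ℕ) (X Y : Fin j → Finset (Fin n)),
      1 ≤ j ∧ (j : ℝ) ≤ alpha (n + 1) ∧ IsTradingTransform X Y ∧
      (∀ i, X i ∈ W) ∧ (∀ i, Y i ∉ W) := by
  classical
  obtain ⟨y, hs1, hs2, hrel, hne, huniq⟩ := exists_min_cert W hnw
  set s : Finset (Finset (Fin n)) := Finset.univ.filter (fun S => y S ≠ 0) with hsdef
  have hsmem : ∀ S, S ∈ s ↔ y S ≠ 0 := by intro S; simp [hsdef]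
  have hsne : s.Nonempty := by
    obtain ⟨S, hS⟩ := hne
    exact ⟨S, (hsmem S).mpr hS⟩
  have hsum_s : ∀ f : Finset (Fin n) → ℝ, (∀ S ∉ s, f S = 0) →
      ∑ S, f S = ∑ i : {x // x ∈ s}, f i.1 := by
    intro f hf
    rw [Finset.sum_coe_sort s f]
    exact (Finset.sum_subset (Finset.subset_univ s) (fun x _ hx => hf x hx)).symm
  -- kernel characterization in subtype form
  have hkerchar : ∀ x : {x // x ∈ s} → ℝ,
      (∀ r, ∑ i : {x // x ∈ s}, x i * Rfun i.1 r = 0) →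
      ∃ t : ℝ, ∀ i : {x // x ∈ s}, x i = t * y i.1 := by
    intro x hx
    set y' : Finset (Fin n) → ℝ := fun S => if h : S ∈ s then x ⟨S, h⟩ else 0 with hy'
    have h1 : ∀ r, ∑ S, y' S * Rfun S r = 0 := by
      intro r
      rw [hsum_s (fun S => y' S * Rfun S r) (fun S hS => by simp [hy', dif_neg hS])]
      have he : ∀ i : {x // x ∈ s}, y' i.1 * Rfun i.1 r = x i * Rfun i.1 r := by
        intro i
        congr 1
        simp only [hy', dif_pos i.2]
      rw [Fintype.sum_congr _ _ he]
      exact hx r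
    have h2 : ∀ S, y S = 0 → y' S = 0 := by
      intro S hS
      have : S ∉ s := by simp [hsmem, hS]
      simp [hy', dif_neg this]
    obtain ⟨t, ht⟩ := huniq y' h1 h2
    refine ⟨t, fun i => ?_⟩
    have h3 := ht i.1
    rw [hy'] at h3
    simpa [dif_pos i.2] using h3
  -- the matrix
  set Cmat : Matrix (Option (Fin n)) {x // x ∈ s} ℝ := Matrix.of (fun r i => Rfun i.1 r)
    with hCmat
  set ys : {x // x ∈ s} → ℝ := fun i => y i.1 with hys
  have hysne : ys ≠ 0 := by
    obtain ⟨S₀, hS₀⟩ := hsne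
    intro h
    have := congrFun h ⟨S₀, hS₀⟩
    exact ((hsmem S₀).mp hS₀) this
  have hysker : Cmat.mulVec ys = 0 := by
    funext r
    have h1 : ∑ S, y S * Rfun S r = ∑ i : {x // x ∈ s}, y i.1 * Rfun i.1 r :=
      hsum_s _ (fun S hS => by
        have : y S = 0 := by_contra (fun h => hS ((hsmem S).mpr h))
        rw [this, zero_mul])
    have h2 := hrel r
    rw [h1] at h2
    show ∑ i, Cmat r i * ys i = 0
    rw [← h2]
    apply Finset.sum_congr rfl
    intro i _
    show Rfun i.1 r * y i.1 = y i.1 * Rfun i.1 r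
    ring
  -- rank computation
  have hkerF0 : ∀ x, Cmat.mulVec x = 0 → ∃ t : ℝ, ∀ i, x i = t * ys i := by
    intro x hx
    apply hkerchar
    intro r
    have hthis : ∑ i, Cmat r i * x i = 0 := by
      have h := congrFun hx r
      simpa [Matrix.mulVec, dotProduct] using h
    calc ∑ i : {x // x ∈ s}, x i * Rfun i.1 r = ∑ i, Cmat r i * x i := by
          apply Finset.sum_congr rfl
          intro i _
          show x i * Rfun i.1 r = Rfun i.1 r * x i
          ring
      _ = 0 := hthis
  have hker_eq : LinearMap.ker Cmat.mulVecLin = Submodule.span ℝ {ys} := by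
    apply le_antisymm
    · intro x hx
      rw [LinearMap.mem_ker, Matrix.mulVecLin_apply] at hx
      obtain ⟨t, ht⟩ := hkerF0 x hx
      rw [Submodule.mem_span_singleton]
      exact ⟨t, by funext i; rw [Pi.smul_apply, smul_eq_mul, ← ht i]⟩
    · rw [Submodule.span_le, Set.singleton_subset_iff]
      rw [SetLike.mem_coe, LinearMap.mem_ker, Matrix.mulVecLin_apply]
      exact hysker
  have hrank : Cmat.rank + 1 = s.card := by
    have h1 := LinearMap.finrank_range_add_finrank_ker Cmat.mulVecLin
    rw [hker_eq, finrank_span_singleton hysne] at h1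
    rw [Module.finrank_fintype_fun_eq_card, Fintype.card_coe] at h1
    exact h1
  -- row space and basis
  have hrowrank : Module.finrank ℝ (Submodule.span ℝ (Set.range Cmat)) = Cmat.rank := by
    have h1 := Matrix.rank_eq_finrank_span_cols Cmat.transpose
    rw [Matrix.rank_transpose] at h1
    exact h1.symm
  obtain ⟨bset, hbsub, hbspan, hbli⟩ := exists_linearIndependent ℝ (Set.range Cmat)
  have hbfin : bset.Finite := (Set.finite_range Cmat).subset hbsub
  haveI : Fintype bset := hbfin.fintype
  have hbcard : bset.toFinset.card = Cmat.rank := by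
    rw [← finrank_span_set_eq_card hbli, hbspan, hrowrank]
  obtain ⟨k, hkdef⟩ : ∃ k, bset.toFinset.card = k := ⟨_, rfl⟩
  have hmk : s.card = k + 1 := by omega
  -- row count bound
  set F : Finset ({x // x ∈ s} → ℝ) := (Set.finite_range Cmat).toFinset with hF
  have hFcard : F.card ≤ n + 1 := by
    have h1 : F ⊆ Finset.univ.image (fun r => Cmat r) := by
      intro x hx
      rw [hF, Set.Finite.mem_toFinset] at hx
      obtain ⟨r, rfl⟩ := hx
      exact Finset.mem_image_of_mem _ (Finset.mem_univ r)
    calc F.card ≤ (Finset.univ.image (fun r => Cmat r)).card := Finset.card_le_card h1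
      _ ≤ (Finset.univ : Finset (Option (Fin n))).card := Finset.card_image_le
      _ = n + 1 := by rw [Finset.card_univ, Fintype.card_option, Fintype.card_fin]
  have hbF : bset.toFinset ⊆ F := by
    intro x hx
    rw [Set.mem_toFinset] at hx
    rw [hF, Set.Finite.mem_toFinset]
    exact hbsub hx
  have hk_le : k ≤ n + 1 := by
    have := Finset.card_le_card hbF
    omega
  -- enumerations
  set ε : Fin (k+1) ≃ {x // x ∈ s} := (finCongr hmk.symm).trans s.equivFin.symm with hε
  set eb : Fin k ≃ {x // x ∈ bset.toFinset} :=
    (finCongr hkdef.symm).trans bset.toFinset.equivFin.symm with heb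
  set C' : Matrix (Fin k) (Fin (k+1)) ℝ := Matrix.of (fun r i => (eb r).1 (ε i)) with hC'
  have hC'row : ∀ r, ∃ r₂, ∀ i, C' r i = Rfun (ε i).1 r₂ := by
    intro r
    have hmem : ((eb r).1 : {x // x ∈ s} → ℝ) ∈ bset := Set.mem_toFinset.mp (eb r).2
    obtain ⟨r₂, hr₂⟩ := hbsub hmem
    refine ⟨r₂, fun i => ?_⟩
    show (eb r).1 (ε i) = Rfun (ε i).1 r₂
    rw [← hr₂]
    rfl
  have hC'01 : ∀ r i, C' r i = 0 ∨ C' r i = 1 := by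
    intro r i
    obtain ⟨r₂, h⟩ := hC'row r
    rw [h i]
    exact Rfun_zero_one _ _
  -- kernel transfer to Fin-indexed picture
  have hkerF : ∀ x : Fin (k+1) → ℝ, (∀ r, ∑ i, C' r i * x i = 0) →
      ∃ t : ℝ, ∀ i, x i = t * y (ε i).1 := by
    intro x hx
    set φ : ({x // x ∈ s} → ℝ) →ₗ[ℝ] ℝ :=
      { toFun := fun f => ∑ i : {x // x ∈ s}, f i * (x (ε.symm i))
        map_add' := fun f g => by
          simp only [Pi.add_apply, add_mul]
          rw [Finset.sum_add_distrib]
        map_smul' := fun c f => by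
          simp only [Pi.smul_apply, smul_eq_mul, RingHom.id_apply, mul_assoc]
          rw [← Finset.mul_sum] } with hφ
    have hbker : ∀ vb ∈ bset, φ vb = 0 := by
      intro vb hvb
      have hvb' : vb ∈ bset.toFinset := Set.mem_toFinset.mpr hvb
      have hvbr : ((eb (eb.symm ⟨vb, hvb'⟩)).1 : {x // x ∈ s} → ℝ) = vb := by
        rw [Equiv.apply_symm_apply]
      show ∑ i : {x // x ∈ s}, vb i * x (ε.symm i) = 0
      rw [← Equiv.sum_comp ε (fun i => vb i * x (ε.symm i))]
      have he : ∀ i : Fin (k+1),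
          vb (ε i) * x (ε.symm (ε i)) = C' (eb.symm ⟨vb, hvb'⟩) i * x i := by
        intro i
        rw [Equiv.symm_apply_apply]
        exact congrArg (fun z => z * x i) (congrFun hvbr (ε i)).symm
      rw [Fintype.sum_congr _ _ he]
      exact hx (eb.symm ⟨vb, hvb'⟩)
    have hφrow : ∀ r₂ : Option (Fin n), φ (Cmat r₂) = 0 := by
      intro r₂
      have h1 : (Cmat r₂ : {x // x ∈ s} → ℝ) ∈ Submodule.span ℝ bset := by
        rw [hbspan]
        exact Submodule.subset_span ⟨r₂, rfl⟩
      have h2 : Submodule.span ℝ bset ≤ LinearMap.ker φ :=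
        Submodule.span_le.mpr (fun vb hvb => LinearMap.mem_ker.mpr (hbker vb hvb))
      exact LinearMap.mem_ker.mp (h2 h1)
    have hxs : ∀ r₂, ∑ i : {x // x ∈ s}, (x (ε.symm i)) * Rfun i.1 r₂ = 0 := by
      intro r₂
      have h3 := hφrow r₂
      calc ∑ i : {x // x ∈ s}, x (ε.symm i) * Rfun i.1 r₂
          = ∑ i : {x // x ∈ s}, (Cmat r₂) i * x (ε.symm i) := by
            apply Finset.sum_congr rfl
            intro i _
            exact mul_comm _ _
        _ = 0 := h3
    obtain ⟨t, ht⟩ := hkerchar (fun i => x (ε.symm i)) hxs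
    refine ⟨t, fun i => ?_⟩
    have h5 := ht (ε i)
    simp only [Equiv.symm_apply_apply] at h5
    exact h5
  -- minor vector
  set z : Fin (k+1) → ℝ := fun i => (-1 : ℝ)^(i : ℕ) * (C'.submatrix id i.succAbove).det
    with hzdef
  have hcof : ∀ wv : Fin (k+1) → ℝ,
      (Matrix.of (Fin.cons wv C') : Matrix (Fin (k+1)) (Fin (k+1)) ℝ).det = ∑ i, wv i * z i := by
    intro wv
    rw [Matrix.det_succ_row_zero]
    apply Finset.sum_congr rfl
    intro i _
    have h1 : (Matrix.of (Fin.cons wv C') : Matrix (Fin (k+1)) (Fin (k+1)) ℝ) 0 i = wv i := rfl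
    have h2 : (Matrix.of (Fin.cons wv C') : Matrix (Fin (k+1)) (Fin (k+1)) ℝ).submatrix
        Fin.succ i.succAbove = C'.submatrix id i.succAbove := by
      ext r l
      simp [Matrix.submatrix_apply, Fin.cons_succ]
      rfl
    rw [h1, h2]
    simp only [hzdef]
    ring
  have hzker : ∀ r, ∑ i, C' r i * z i = 0 := by
    intro r
    have h0 : (Matrix.of (Fin.cons (C' r) C') : Matrix (Fin (k+1)) (Fin (k+1)) ℝ).det = 0 := by
      apply Matrix.det_zero_of_row_eq (Fin.succ_ne_zero r).symm
      show (Fin.cons (C' r) C' : ∀ _ : Fin (k+1), Fin (k+1) → ℝ) 0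
          = (Fin.cons (C' r) C' : ∀ _ : Fin (k+1), Fin (k+1) → ℝ) r.succ
      rfl
    rw [hcof (C' r)] at h0
    exact h0
  obtain ⟨t, hzt⟩ := hkerF z hzker
  have hdet0ne : (C'.submatrix id (Fin.succAbove 0)).det ≠ 0 := by
    intro h0
    obtain ⟨u, hune, humul⟩ := Matrix.exists_mulVec_eq_zero_iff.mpr h0
    set uh : Fin (k+1) → ℝ := (0 : Fin (k+1)).insertNth 0 u with huh
    have e1 : uh 0 = 0 := by rw [huh]; simp
    have e2 : ∀ c, uh ((0 : Fin (k+1)).succAbove c) = u c := by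
      intro c
      rw [huh]
      simp
    have huhker : ∀ r, ∑ i, C' r i * uh i = 0 := by
      intro r
      rw [Fin.sum_univ_succAbove (fun i => C' r i * uh i) 0]
      rw [e1, mul_zero, zero_add]
      have e3 : ∀ c : Fin k,
          C' r ((0 : Fin (k+1)).succAbove c) * uh ((0 : Fin (k+1)).succAbove c)
          = (C'.submatrix id (Fin.succAbove 0)) r c * u c := by
        intro c
        rw [e2]
        rfl
      rw [Fintype.sum_congr _ _ e3]
      have h4 := congrFun humul r
      simpa [Matrix.mulVec, dotProduct] using h4
    obtain ⟨t', ht'⟩ := hkerF uh huhker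
    have h2 : y (ε 0).1 ≠ 0 := (hsmem _).mp (ε 0).2
    have ht'0 : t' = 0 := by
      have h1 := ht' 0
      rw [e1] at h1
      rcases mul_eq_zero.mp h1.symm with h | h
      · exact h
      · exact absurd h h2
    apply hune
    funext c
    have h3 := ht' ((0 : Fin (k+1)).succAbove c)
    rw [e2 c, ht'0, zero_mul] at h3
    exact h3
  have hz0ne : z 0 ≠ 0 := by
    intro h
    apply hdet0ne
    simpa [hzdef] using h
  have htne : t ≠ 0 := fun h => hz0ne (by rw [hzt 0, h, zero_mul])
  -- sign normalization
  set σ : ℝ := if 0 < t then 1 else -1 with hσ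
  have hσt : 0 < σ * t := by
    by_cases h : 0 < t
    · rw [hσ, if_pos h, one_mul]; exact h
    · rw [hσ, if_neg h, neg_one_mul]
      have h5 : t < 0 := lt_of_le_of_ne (not_lt.mp h) htne
      linarith
  set z' : Fin (k+1) → ℝ := fun i => σ * z i with hz'def
  have hz't : ∀ i, z' i = (σ * t) * y (ε i).1 := by
    intro i
    simp only [hz'def]
    rw [hzt i]
    ring
  have hz'pos : ∀ i, (ε i).1 ∈ W → 0 < z' i := by
    intro i hi
    rw [hz't]
    have h1 : 0 ≤ y (ε i).1 := hs1 _ hi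
    have h2 : y (ε i).1 ≠ 0 := (hsmem _).mp (ε i).2
    exact mul_pos hσt (lt_of_le_of_ne h1 (Ne.symm h2))
  have hz'neg : ∀ i, (ε i).1 ∉ W → z' i < 0 := by
    intro i hi
    rw [hz't]
    have h1 : y (ε i).1 ≤ 0 := hs2 _ hi
    have h2 : y (ε i).1 ≠ 0 := (hsmem _).mp (ε i).2
    exact mul_neg_of_pos_of_neg hσt (lt_of_le_of_ne h1 h2)
  -- sum identities
  have hysum0 : ∀ r, ∑ i : Fin (k+1), y (ε i).1 * Rfun (ε i).1 r = 0 := by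
    intro r
    rw [Equiv.sum_comp ε (fun i => y i.1 * Rfun i.1 r)]
    rw [← hsum_s (fun S => y S * Rfun S r) (fun S hS => by
      have h6 : y S = 0 := by_contra (fun h => hS ((hsmem S).mpr h))
      simp [h6])]
    exact hrel r
  have hz'sum : ∑ i, z' i = 0 := by
    have h1 := hysum0 none
    simp_rw [Rfun_none, mul_one] at h1
    calc ∑ i, z' i = ∑ i, (σ * t) * y (ε i).1 := Fintype.sum_congr _ _ hz't
      _ = (σ * t) * ∑ i, y (ε i).1 := by rw [Finset.mul_sum]
      _ = 0 := by rw [h1, mul_zero]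
  have hz'player : ∀ p, ∑ i, z' i * (if p ∈ (ε i).1 then (1:ℝ) else 0) = 0 := by
    intro p
    have h1 := hysum0 (some p)
    calc ∑ i, z' i * (if p ∈ (ε i).1 then (1:ℝ) else 0)
        = ∑ i, (σ * t) * (y (ε i).1 * Rfun (ε i).1 (some p)) := by
          apply Finset.sum_congr rfl
          intro i _
          rw [hz't, Rfun_some]
          ring
      _ = (σ * t) * ∑ i, y (ε i).1 * Rfun (ε i).1 (some p) := by rw [Finset.mul_sum]
      _ = 0 := by rw [h1, mul_zero]
  -- integrality
  set Cz : Matrix (Fin k) (Fin (k+1)) ℤ := Matrix.of (fun r i => if C' r i = 1 then 1 else 0)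
    with hCzdef
  have hCzcast : ∀ r i, ((Cz r i : ℤ) : ℝ) = C' r i := by
    intro r i
    rcases hC'01 r i with h | h
    · have h2 : Cz r i = 0 := by
        show (if C' r i = 1 then (1:ℤ) else 0) = 0
        rw [if_neg (by rw [h]; norm_num)]
      rw [h2, h]
      norm_num
    · have h2 : Cz r i = 1 := by
        show (if C' r i = 1 then (1:ℤ) else 0) = 1
        rw [if_pos h]
      rw [h2, h]
      norm_num
  set zz : Fin (k+1) → ℤ := fun i => (-1 : ℤ)^(i:ℕ) * (Cz.submatrix id i.succAbove).det
    with hzzdef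
  have hzzcast : ∀ i, ((zz i : ℤ) : ℝ) = z i := by
    intro i
    have hmap : (Int.castRingHom ℝ).mapMatrix (Cz.submatrix id i.succAbove)
        = C'.submatrix id i.succAbove := by
      ext r l
      simp only [RingHom.mapMatrix_apply, Matrix.map_apply, Matrix.submatrix_apply]
      exact hCzcast r _
    have hdet := RingHom.map_det (Int.castRingHom ℝ) (Cz.submatrix id i.succAbove)
    calc ((zz i : ℤ) : ℝ) = (-1:ℝ)^(i:ℕ) * ((Cz.submatrix id i.succAbove).det : ℝ) := by
          simp only [hzzdef]
          push_cast
          ring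
      _ = (-1:ℝ)^(i:ℕ) * (C'.submatrix id i.succAbove).det := by
          rw [show ((Cz.submatrix id i.succAbove).det : ℝ)
            = (Int.castRingHom ℝ) (Cz.submatrix id i.succAbove).det from rfl, hdet, hmap]
      _ = z i := by simp only [hzdef]
  set σz : ℤ := if 0 < t then 1 else -1 with hσz
  have hσzcast : ((σz : ℤ) : ℝ) = σ := by
    by_cases h : 0 < t
    · rw [hσz, hσ, if_pos h, if_pos h]; norm_num
    · rw [hσz, hσ, if_neg h, if_neg h]; norm_num
  set z'z : Fin (k+1) → ℤ := fun i => σz * zz i with hz'zdef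
  have hz'zcast : ∀ i, ((z'z i : ℤ) : ℝ) = z' i := by
    intro i
    simp only [hz'zdef, hz'def]
    push_cast
    rw [hσzcast, hzzcast]
  -- column classes
  set Wc : Finset (Fin (k+1)) := Finset.univ.filter (fun i => (ε i).1 ∈ W) with hWcdef
  have hWcmem : ∀ i, i ∈ Wc ↔ (ε i).1 ∈ W := by intro i; simp [hWcdef]
  have hz'zpos : ∀ i ∈ Wc, 0 < z'z i := by
    intro i hi
    have h1 : (0:ℝ) < z' i := hz'pos i ((hWcmem i).mp hi)
    rw [← hz'zcast i] at h1
    exact_mod_cast h1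
  have hz'zneg : ∀ i ∉ Wc, z'z i < 0 := by
    intro i hi
    have h1 : z' i < 0 := hz'neg i (fun h => hi ((hWcmem i).mpr h))
    rw [← hz'zcast i] at h1
    exact_mod_cast h1
  set mX : Fin (k+1) → ℕ := fun i => if i ∈ Wc then (z'z i).toNat else 0 with hmXdef
  set mY : Fin (k+1) → ℕ := fun i => if i ∈ Wc then 0 else (-z'z i).toNat with hmYdef
  have hmXcast : ∀ i, ((mX i : ℕ) : ℤ) = if i ∈ Wc then z'z i else 0 := by
    intro i
    by_cases h : i ∈ Wc
    · simp only [hmXdef, if_pos h]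
      exact Int.toNat_of_nonneg (le_of_lt (hz'zpos i h))
    · simp only [hmXdef, if_neg h]
      norm_num
  have hmYcast : ∀ i, ((mY i : ℕ) : ℤ) = if i ∈ Wc then 0 else -z'z i := by
    intro i
    by_cases h : i ∈ Wc
    · simp only [hmYdef, if_pos h]
      norm_num
    · simp only [hmYdef, if_neg h]
      exact Int.toNat_of_nonneg (by have := hz'zneg i h; omega)
  have hsumz : ∑ i, z'z i = 0 := by
    have h1 : ((∑ i, z'z i : ℤ) : ℝ) = 0 := by
      push_cast
      rw [Fintype.sum_congr _ _ hz'zcast]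
      exact hz'sum
    exact_mod_cast h1
  set j : ℕ := ∑ i, mX i with hjdef
  have hjz : (j : ℤ) = ∑ i, (if i ∈ Wc then z'z i else 0) := by
    rw [hjdef]
    push_cast
    rw [Fintype.sum_congr _ _ hmXcast]
  have hWcne : Wc.Nonempty := by
    by_contra h
    rw [Finset.not_nonempty_iff_eq_empty] at h
    have hall : ∀ i : Fin (k+1), z' i < 0 := by
      intro i
      apply hz'neg
      intro hW
      have h7 : i ∈ Wc := (hWcmem i).mpr hW
      rw [h] at h7
      exact absurd h7 (Finset.notMem_empty i)
    have hlt : ∑ i : Fin (k+1), z' i < 0 := by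
      have h8 := Finset.sum_lt_sum_of_nonempty (Finset.univ_nonempty (α := Fin (k+1)))
        (g := fun _ => (0:ℝ)) (fun i _ => hall i)
      simpa using h8
    rw [hz'sum] at hlt
    exact lt_irrefl 0 hlt
  have hj1 : 1 ≤ j := by
    obtain ⟨i₀, hi₀⟩ := hWcne
    have h1 : 1 ≤ mX i₀ := by
      simp only [hmXdef, if_pos hi₀]
      have := hz'zpos i₀ hi₀
      omega
    rw [hjdef]
    calc 1 ≤ mX i₀ := h1
      _ ≤ ∑ i, mX i := Finset.single_le_sum (f := mX) (fun i _ => Nat.zero_le _)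
          (Finset.mem_univ i₀)
  -- cardinalities of sigma types
  have hcardX : Fintype.card ((i : Fin (k+1)) × Fin (mX i)) = j := by
    rw [Fintype.card_sigma]
    simp only [Fintype.card_fin]
    exact hjdef.symm
  have hjY : ∑ i, mY i = j := by
    have h1 : ((∑ i, mY i : ℕ) : ℤ) = ((j : ℕ) : ℤ) := by
      push_cast
      rw [Fintype.sum_congr _ _ hmYcast]
      have h2 : ∑ i, ((if i ∈ Wc then (0:ℤ) else -z'z i)) 
          = - ∑ i, (if i ∈ Wc then (0:ℤ) else z'z i) := by
        rw [← Finset.sum_neg_distrib]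
        apply Finset.sum_congr rfl
        intro i _
        by_cases h : i ∈ Wc <;> simp [h]
      have h3 : ∑ i, (if i ∈ Wc then z'z i else 0) + ∑ i, (if i ∈ Wc then (0:ℤ) else z'z i)
          = ∑ i, z'z i := by
        rw [← Finset.sum_add_distrib]
        apply Finset.sum_congr rfl
        intro i _
        by_cases h : i ∈ Wc <;> simp [h]
      rw [h2]
      rw [hsumz] at h3
      rw [← hjz] at h3
      linarith
    exact_mod_cast h1
  have hcardY : Fintype.card ((i : Fin (k+1)) × Fin (mY i)) = j := by
    rw [Fintype.card_sigma]
    simp only [Fintype.card_fin]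
    exact hjY
  -- counting lemma
  have hcnt : ∀ (p : Fin n) (mv : Fin (k+1) → ℕ)
      (hc : Fintype.card ((i : Fin (k+1)) × Fin (mv i)) = j),
      (Finset.univ.filter fun idx : Fin j =>
        p ∈ (ε (((Fintype.equivFinOfCardEq hc).symm idx).1)).1).card
        = ∑ i, if p ∈ (ε i).1 then mv i else 0 := by
    intro p mv hc
    rw [Finset.card_filter]
    rw [← Equiv.sum_comp (Fintype.equivFinOfCardEq hc)
      (fun idx => if p ∈ (ε (((Fintype.equivFinOfCardEq hc).symm idx).1)).1 then (1:ℕ) else 0)]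
    have he : ∀ σx : (i : Fin (k+1)) × Fin (mv i),
        (if p ∈ (ε (((Fintype.equivFinOfCardEq hc).symm
            ((Fintype.equivFinOfCardEq hc) σx)).1)).1 then (1:ℕ) else 0)
        = if p ∈ (ε σx.1).1 then 1 else 0 := by
      intro σx
      rw [Equiv.symm_apply_apply]
    rw [Fintype.sum_congr _ _ he]
    rw [← Finset.univ_sigma_univ, Finset.sum_sigma]
    apply Finset.sum_congr rfl
    intro i _
    by_cases h : p ∈ (ε i).1 <;> simp [h]
  -- the per-player balance
  have htrade : ∀ p, (∑ i, if p ∈ (ε i).1 then mX i else 0)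
      = ∑ i, if p ∈ (ε i).1 then mY i else 0 := by
    intro p
    have hplayerz : ∑ i, (if p ∈ (ε i).1 then z'z i else 0) = 0 := by
      have h1 : ((∑ i, (if p ∈ (ε i).1 then z'z i else 0) : ℤ) : ℝ) = 0 := by
        push_cast
        have he : ∀ i, (if p ∈ (ε i).1 then ((z'z i : ℤ):ℝ) else 0)
            = z' i * (if p ∈ (ε i).1 then (1:ℝ) else 0) := by
          intro i
          by_cases h : p ∈ (ε i).1 <;> simp [h, hz'zcast i]
        rw [Fintype.sum_congr _ _ he, hz'player p]
      exact_mod_cast h1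
    have h2 : ((∑ i, if p ∈ (ε i).1 then mX i else 0 : ℕ) : ℤ)
        = ((∑ i, if p ∈ (ε i).1 then mY i else 0 : ℕ) : ℤ) := by
      push_cast
      have e1 : ∀ i : Fin (k+1), (if p ∈ (ε i).1 then ((mX i : ℕ):ℤ) else 0)
          - (if p ∈ (ε i).1 then ((mY i : ℕ):ℤ) else 0)
          = (if p ∈ (ε i).1 then z'z i else 0) := by
        intro i
        by_cases h : p ∈ (ε i).1
        · rw [if_pos h, if_pos h, if_pos h, hmXcast, hmYcast]
          by_cases hw : i ∈ Wc <;> simp [hw]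
        · simp [h]
      have e2 : ∑ i, ((if p ∈ (ε i).1 then ((mX i : ℕ):ℤ) else 0)
          - (if p ∈ (ε i).1 then ((mY i : ℕ):ℤ) else 0)) = 0 := by
        rw [Fintype.sum_congr _ _ e1]
        exact hplayerz
      rw [Finset.sum_sub_distrib] at e2
      linarith
    exact_mod_cast h2
  -- membership
  have hXmem : ∀ idx : Fin j, (ε (((Fintype.equivFinOfCardEq hcardX).symm idx).1)).1 ∈ W := by
    intro idx
    have h1 : ((Fintype.equivFinOfCardEq hcardX).symm idx).1 ∈ Wc := by
      by_contra h
      have h2 : mX ((Fintype.equivFinOfCardEq hcardX).symm idx).1 = 0 := by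
        simp [hmXdef, h]
      have h3 := ((Fintype.equivFinOfCardEq hcardX).symm idx).2.2
      omega
    exact (hWcmem _).mp h1
  have hYmem : ∀ idx : Fin j, (ε (((Fintype.equivFinOfCardEq hcardY).symm idx).1)).1 ∉ W := by
    intro idx
    have h1 : ((Fintype.equivFinOfCardEq hcardY).symm idx).1 ∉ Wc := by
      intro h
      have h2 : mY ((Fintype.equivFinOfCardEq hcardY).symm idx).1 = 0 := by
        simp [hmYdef, h]
      have h3 := ((Fintype.equivFinOfCardEq hcardY).symm idx).2.2
      omega
    intro hW
    exact h1 ((hWcmem _).mpr hW)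
  -- the determinant bound
  have hbound : (j : ℝ) ≤ alpha (n+1) := by
    set wrow : Fin (k+1) → ℝ := fun i => if i ∈ Wc then 1 else 0 with hwrowdef
    have hjreal : (j:ℝ) = ∑ i, wrow i * z' i := by
      have h1 : ∀ i : Fin (k+1), wrow i * z' i = if i ∈ Wc then z' i else 0 := by
        intro i
        by_cases h : i ∈ Wc <;> simp [hwrowdef, h]
      rw [Fintype.sum_congr _ _ h1]
      have h2 : ((j:ℕ):ℝ) = ∑ i, ((mX i : ℕ):ℝ) := by
        rw [hjdef]
        push_cast
        rfl
      rw [h2]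
      apply Finset.sum_congr rfl
      intro i _
      by_cases h : i ∈ Wc
      · rw [if_pos h]
        have h3 := hmXcast i
        rw [if_pos h] at h3
        have h4 : ((mX i : ℕ):ℝ) = ((z'z i : ℤ):ℝ) := by exact_mod_cast h3
        rw [h4, hz'zcast]
      · rw [if_neg h]
        simp [hmXdef, h]
    set D : Matrix (Fin (k+1)) (Fin (k+1)) ℝ := Matrix.of (Fin.cons wrow C') with hDdef
    have hD01 : ∀ i l, D i l = 0 ∨ D i l = 1 := by
      intro i l
      refine Fin.cases ?_ ?_ i
      · show (Fin.cons wrow C' : ∀ _ : Fin (k+1), Fin (k+1) → ℝ) 0 l = 0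
          ∨ (Fin.cons wrow C' : ∀ _ : Fin (k+1), Fin (k+1) → ℝ) 0 l = 1
        show wrow l = 0 ∨ wrow l = 1
        by_cases h : l ∈ Wc <;> simp [hwrowdef, h]
      · intro r
        show (Fin.cons wrow C' : ∀ _ : Fin (k+1), Fin (k+1) → ℝ) r.succ l = 0
          ∨ (Fin.cons wrow C' : ∀ _ : Fin (k+1), Fin (k+1) → ℝ) r.succ l = 1
        show C' r l = 0 ∨ C' r l = 1
        exact hC'01 r l
    have hdetD : D.det = ∑ i, wrow i * z i := hcof wrow
    have hjdet : (j:ℝ) = σ * D.det := by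
      rw [hdetD, Finset.mul_sum, hjreal]
      apply Finset.sum_congr rfl
      intro i _
      simp only [hz'def]
      ring
    have habs : |D.det| = (j:ℝ) := by
      have h1 : |σ| = 1 := by
        rw [hσ]
        by_cases h : 0 < t <;> simp [h]
      calc |D.det| = |σ| * |D.det| := by rw [h1, one_mul]
        _ = |σ * D.det| := (abs_mul σ D.det).symm
        _ = |(j:ℝ)| := by rw [← hjdet]
        _ = (j:ℝ) := abs_of_nonneg (Nat.cast_nonneg j)
    rcases Nat.lt_or_ge k (n+1) with hlt | hge
    · have h1 : |D.det| ≤ alpha (k+1) := abs_det_le_alpha (M := D) hD01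
      have h2 : alpha (k+1) ≤ alpha (n+1) := alpha_mono (by omega)
      rw [habs] at h1
      linarith
    · have hkeq : k = n + 1 := le_antisymm hk_le hge
      have hbeqF : bset.toFinset = F := by
        apply Finset.eq_of_subset_of_card_le hbF
        omega
      have honemem : (Cmat none : {x // x ∈ s} → ℝ) ∈ bset.toFinset := by
        rw [hbeqF, hF, Set.Finite.mem_toFinset]
        exact ⟨none, rfl⟩
      have hr₁row : ∀ i, C' (eb.symm ⟨Cmat none, honemem⟩) i = 1 := by
        intro i
        have h1 : ((eb (eb.symm ⟨Cmat none, honemem⟩)).1 : {x // x ∈ s} → ℝ) = Cmat none := by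
          rw [Equiv.apply_symm_apply]
        calc C' (eb.symm ⟨Cmat none, honemem⟩) i
            = (eb (eb.symm ⟨Cmat none, honemem⟩)).1 (ε i) := rfl
          _ = (Cmat none) (ε i) := congrFun h1 (ε i)
          _ = 1 := rfl
      have honesD : ∀ l, D (eb.symm ⟨Cmat none, honemem⟩).succ l = 1 := by
        intro l
        show (Fin.cons wrow C' : ∀ _ : Fin (k+1), Fin (k+1) → ℝ)
          (eb.symm ⟨Cmat none, honemem⟩).succ l = 1
        show C' (eb.symm ⟨Cmat none, honemem⟩) l = 1
        exact hr₁row l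
      obtain ⟨M₀, hM₀01, hM₀det⟩ :=
        exists_smaller_of_ones_row D hD01 (eb.symm ⟨Cmat none, honemem⟩).succ honesD
      have h1 : |M₀.det| ≤ alpha k := abs_det_le_alpha (M := M₀) hM₀01
      have h5 : (j:ℝ) = |M₀.det| := habs.symm.trans hM₀det
      have h6 : alpha k = alpha (n+1) := by rw [hkeq]
      linarith
  -- assemble
  refine ⟨j, fun idx => (ε (((Fintype.equivFinOfCardEq hcardX).symm idx).1)).1,
    fun idx => (ε (((Fintype.equivFinOfCardEq hcardY).symm idx).1)).1,
    hj1, hbound, ?_, hXmem, hYmem⟩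
  intro p
  rw [hcnt p mX hcardX, hcnt p mY hcardY]
  exact htrade p


theorem stmt_5 {n : ℕ} (W : Set (Finset (Fin n))) :
    IsWeighted W ↔ TradeRobustUpTo W (alpha (n + 1)) := by
  constructor
  · intro hw
    exact weighted_implies_robust W hw (alpha (n + 1))
  · intro hr
    by_contra hnw
    exact hr (exists_trading_certificate W hnw)
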